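/- arXiv:2501.12045 — 3 statements merged into one kernel-verified Lean document; each statement's English description precedes it below -/
import Mathlib

section
/- Let m > 1 be an integer with 2m+1 prime. A position M = (n_0, n_1, ..., n_{2m}) in extended circular nim ECN((2m+1)_{1,2,...,m-1}, 2m-1) is a P-position if and only if some cyclic rotation or reflection of M lies in P = {M : n_0 = 0, and n_1 = n_2 = ... = n_{m-1} = n_m + n_{m+1} = n_{m+2} = ... = n_{2m}}. -/
/-- `IsN move x`: `x` is an N-position (next player wins) for the game with
move relation `move` (least fixed point; correct for short games). -/
inductive IsN {α : Type*} (move : α → α → Prop) : α → Prop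
  | intro (x y : α) (hxy : move x y) (hy : ∀ z, move y z → IsN move z) : IsN move x

/-- `IsP move x`: `x` is a P-position (previous player wins) under normal play. -/
def IsP {α : Type*} (move : α → α → Prop) (x : α) : Prop :=
  ∀ y, move x y → IsN move y

/-- Move relation of extended circular nim `ECN(m_S, k)`: reduce some piles,
all lying among `k` piles taken every `s`-th pile (for some `s ∈ S`) starting
at some index `i`, removing at least one token in total. -/
def ecnMove (m : ℕ) (S : Set ℕ) (k : ℕ) (x y : Fin m → ℕ) : Prop :=
  y ≠ x ∧ (∀ j, y j ≤ x j) ∧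
    ∃ s ∈ S, ∃ i : ℕ, ∀ j : Fin m, y j ≠ x j → ∃ t < k, (j : ℕ) = (i + t * s) % m

/-- `cyc m Q n` : some cyclic rotation of `n`, or of its reversal, satisfies `Q`
(the relation `M ∈_↻ P`). -/
def cyc (m : ℕ) (Q : (Fin m → ℕ) → Prop) (n : Fin m → ℕ) : Prop :=
  ∃ r : ℕ,
    Q (fun j => n ⟨(j.1 + r) % m, Nat.mod_lt _ (Nat.lt_of_le_of_lt (Nat.zero_le _) j.isLt)⟩) ∨
    Q (fun j => n ⟨(r + (m - j.1)) % m, Nat.mod_lt _ (Nat.lt_of_le_of_lt (Nat.zero_le _) j.isLt)⟩)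


namespace ECN

variable {m : ℕ}

/-- The intrinsic P-position pattern with zero at `z` and generic value `c`. -/
def Pat (m : ℕ) (z : ZMod (2*m+1)) (c : ℕ) (n : ZMod (2*m+1) → ℕ) : Prop :=
  n z = 0 ∧ n (z + (m : ZMod (2*m+1))) + n (z + (m : ZMod (2*m+1)) + 1) = c ∧
  ∀ j, j ≠ z → j ≠ z + (m : ZMod (2*m+1)) → j ≠ z + (m : ZMod (2*m+1)) + 1 → n j = c

def PP (m : ℕ) (n : ZMod (2*m+1) → ℕ) : Prop := ∃ z c, Pat m z c n

/-- Clean form of the move relation. -/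
def Mv (m : ℕ) (x y : ZMod (2*m+1) → ℕ) : Prop :=
  y ≠ x ∧ (∀ j, y j ≤ x j) ∧ ∃ s : ℕ, (1 ≤ s ∧ s ≤ m - 1) ∧
    ∃ p : ZMod (2*m+1), ∀ j, y j ≠ x j → j ≠ p ∧ j ≠ p + (s : ZMod (2*m+1))

lemma zeq {a b : ℕ} (ha : a < 2*m+1) (hb : b < 2*m+1) :
    ((a : ZMod (2*m+1)) = (b : ZMod (2*m+1))) ↔ a = b := by
  constructor
  · intro h
    have := congrArg ZMod.val h
    rwa [ZMod.val_natCast_of_lt ha, ZMod.val_natCast_of_lt hb] at this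
  · rintro rfl; rfl

lemma zne {a b : ℕ} (ha : a < 2*m+1) (hb : b < 2*m+1) (h : a ≠ b) :
    (a : ZMod (2*m+1)) ≠ (b : ZMod (2*m+1)) := fun hh => h ((zeq ha hb).mp hh)

lemma zcast_val (x : ZMod (2*m+1)) : ((x.val : ℕ) : ZMod (2*m+1)) = x :=
  ZMod.natCast_rightInverse x

lemma zval_lt (x : ZMod (2*m+1)) : x.val < 2*m+1 := ZMod.val_lt x

/-- good pair: the two positions that a move may avoid. -/
def good (m : ℕ) (u v : ZMod (2*m+1)) : Prop :=
  ∃ s : ℕ, (1 ≤ s ∧ s ≤ m - 1) ∧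
    (v = u + (s : ZMod (2*m+1)) ∨ u = v + (s : ZMod (2*m+1)))

lemma good_of (hm : 1 < m) {u v : ZMod (2*m+1)} (h0 : v ≠ u)
    (h1 : v ≠ u + (m : ZMod (2*m+1))) (h2 : v ≠ u + (m : ZMod (2*m+1)) + 1) :
    good m u v := by
  set d := (v - u).val with hd
  have hdlt : d < 2*m+1 := zval_lt _
  have hvu : v = u + (d : ZMod (2*m+1)) := by
    rw [hd, zcast_val]; ring
  have hd0 : d ≠ 0 := by
    intro h; apply h0
    rw [hvu, h]; simp
  have hdm : d ≠ m := by
    intro h; apply h1; rw [hvu, h]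
  have hdm1 : d ≠ m + 1 := by
    intro h; apply h2; rw [hvu, h]; push_cast; ring
  rcases le_or_gt d (m-1) with hc | hc
  · exact ⟨d, ⟨by omega, hc⟩, Or.inl hvu⟩
  · refine ⟨2*m+1-d, ⟨by omega, by omega⟩, Or.inr ?_⟩
    rw [hvu]
    have : ((2*m+1-d : ℕ) : ZMod (2*m+1)) + (d : ZMod (2*m+1)) = 0 := by
      rw [← Nat.cast_add]
      have : 2*m+1-d+d = 2*m+1 := by omega
      rw [this, ZMod.natCast_self]
    rw [add_assoc, add_comm ((d : ZMod (2*m+1))), this, add_zero]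



lemma zm_ne_zero (hm : 1 < m) : (m : ZMod (2*m+1)) ≠ 0 := by
  have := @zne m m 0 (by omega) (by omega) (by omega); simpa using this

lemma zm1_ne_zero (hm : 1 < m) : (m : ZMod (2*m+1)) + 1 ≠ 0 := by
  have := @zne m (m+1) 0 (by omega) (by omega) (by omega)
  simpa [Nat.cast_add] using this

lemma zone_ne_zero (hm : 1 < m) : (1 : ZMod (2*m+1)) ≠ 0 := by
  have := @zne m 1 0 (by omega) (by omega) (by omega); simpa using this

lemma triple_ne1 (hm : 1 < m) (z : ZMod (2*m+1)) : z + (m : ZMod (2*m+1)) ≠ z := by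
  intro h; exact zm_ne_zero hm (by rwa [add_eq_left] at h)

lemma triple_ne2 (hm : 1 < m) (z : ZMod (2*m+1)) : z + (m : ZMod (2*m+1)) + 1 ≠ z := by
  intro h; rw [add_assoc, add_eq_left] at h; exact zm1_ne_zero hm h

lemma triple_ne3 (hm : 1 < m) (z : ZMod (2*m+1)) :
    z + (m : ZMod (2*m+1)) + 1 ≠ z + (m : ZMod (2*m+1)) := by
  intro h; rw [add_eq_left] at h; exact zone_ne_zero hm h

/-- the standard P-position shape. -/
def mk (m : ℕ) (z : ZMod (2*m+1)) (a b c : ℕ) : ZMod (2*m+1) → ℕ := fun j =>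
  if j = z then 0 else if j = z + (m : ZMod (2*m+1)) then a
  else if j = z + (m : ZMod (2*m+1)) + 1 then b else c

lemma mk_z (hm : 1 < m) (z : ZMod (2*m+1)) (a b c : ℕ) : mk m z a b c z = 0 := by
  simp [mk]

lemma mk_a (hm : 1 < m) (z : ZMod (2*m+1)) (a b c : ℕ) :
    mk m z a b c (z + (m : ZMod (2*m+1))) = a := by
  rw [mk, if_neg (triple_ne1 hm z), if_pos rfl]

lemma mk_b (hm : 1 < m) (z : ZMod (2*m+1)) (a b c : ℕ) :
    mk m z a b c (z + (m : ZMod (2*m+1)) + 1) = b := by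
  rw [mk, if_neg (triple_ne2 hm z), if_neg (triple_ne3 hm z), if_pos rfl]

lemma mk_c (hm : 1 < m) (z : ZMod (2*m+1)) (a b c : ℕ) {j : ZMod (2*m+1)}
    (h1 : j ≠ z) (h2 : j ≠ z + (m : ZMod (2*m+1))) (h3 : j ≠ z + (m : ZMod (2*m+1)) + 1) :
    mk m z a b c j = c := by
  rw [mk, if_neg h1, if_neg h2, if_neg h3]

lemma pat_mk (hm : 1 < m) (z : ZMod (2*m+1)) {a b c : ℕ} (hab : a + b = c) :
    Pat m z c (mk m z a b c) := by
  refine ⟨mk_z hm z a b c, ?_, fun j h1 h2 h3 => mk_c hm z a b c h1 h2 h3⟩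
  rw [mk_a hm, mk_b hm, hab]

lemma pat_le {z : ZMod (2*m+1)} {c : ℕ} {n : ZMod (2*m+1) → ℕ} (h : Pat m z c n)
    (j : ZMod (2*m+1)) : n j ≤ c := by
  obtain ⟨h0, hs, hg⟩ := h
  by_cases e1 : j = z
  · rw [e1, h0]; exact Nat.zero_le c
  by_cases e2 : j = z + (m : ZMod (2*m+1))
  · rw [e2]; omega
  by_cases e3 : j = z + (m : ZMod (2*m+1)) + 1
  · rw [e3]; omega
  · rw [hg j e1 e2 e3]

lemma pat_sum (hm : 1 < m) {z : ZMod (2*m+1)} {c : ℕ} {n : ZMod (2*m+1) → ℕ}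
    (h : Pat m z c n) : ∑ j, n j = (2*m-1) * c := by
  obtain ⟨h0, hs, hg⟩ := h
  classical
  set T : Finset (ZMod (2*m+1)) :=
    {z, z + (m : ZMod (2*m+1)), z + (m : ZMod (2*m+1)) + 1} with hT
  have hzm := triple_ne1 hm z
  have hzm1 := triple_ne2 hm z
  have hmm1 := triple_ne3 hm z
  have hTcard : T.card = 3 := by
    rw [hT, Finset.card_insert_of_notMem (by simp [hzm.symm, hzm1.symm]),
      Finset.card_insert_of_notMem (by simp [hmm1.symm]), Finset.card_singleton]
  have hsplit : ∑ j ∈ T, n j + ∑ j ∈ Tᶜ, n j = ∑ j, n j := Finset.sum_add_sum_compl T n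
  have hTsum : ∑ j ∈ T, n j = c := by
    rw [hT, Finset.sum_insert (by simp [hzm.symm, hzm1.symm]),
      Finset.sum_insert (by simp [hmm1.symm]), Finset.sum_singleton, h0]
    omega
  have hTc : ∑ j ∈ Tᶜ, n j = (2*m+1-3) * c := by
    have : ∀ j ∈ Tᶜ, n j = c := by
      intro j hj
      rw [Finset.mem_compl, hT] at hj
      simp only [Finset.mem_insert, Finset.mem_singleton] at hj
      push_neg at hj
      exact hg j hj.1 hj.2.1 hj.2.2
    rw [Finset.sum_congr rfl this, Finset.sum_const, Finset.card_compl, hTcard, smul_eq_mul]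
    congr 1
    rw [ZMod.card]
  have : 2*m+1-3 = 2*m-2 := by omega
  rw [← hsplit, hTsum, hTc, this]
  have h2 : 2*m-1 = (2*m-2) + 1 := by omega
  rw [h2, Nat.add_mul, one_mul]
  exact Nat.add_comm _ _

/-- builder: the generic "construct a move to a P-position" lemma. -/
lemma move_mk (hm : 1 < m) (n : ZMod (2*m+1) → ℕ) (z : ZMod (2*m+1)) (a b c : ℕ)
    (hab : a + b = c) (ha : a ≤ n (z + (m : ZMod (2*m+1))))
    (hb : b ≤ n (z + (m : ZMod (2*m+1)) + 1))
    (hc : ∀ j, j ≠ z → j ≠ z + (m : ZMod (2*m+1)) → j ≠ z + (m : ZMod (2*m+1)) + 1 → c ≤ n j)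
    (u v : ZMod (2*m+1)) (hu : mk m z a b c u = n u) (hv : mk m z a b c v = n v)
    (hg : good m u v) (hne : mk m z a b c ≠ n) : Mv m n (mk m z a b c) := by
  refine ⟨hne, ?_, ?_⟩
  · intro j
    by_cases e1 : j = z
    · rw [e1, mk_z hm]; exact Nat.zero_le _
    by_cases e2 : j = z + (m : ZMod (2*m+1))
    · rw [e2, mk_a hm]; exact ha
    by_cases e3 : j = z + (m : ZMod (2*m+1)) + 1
    · rw [e3, mk_b hm]; exact hb
    · rw [mk_c hm z a b c e1 e2 e3]; exact hc j e1 e2 e3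
  · obtain ⟨s, hs, hor⟩ := hg
    refine ⟨s, hs, ?_⟩
    rcases hor with h | h
    · refine ⟨u, fun j hj => ⟨?_, ?_⟩⟩
      · rintro rfl; exact hj hu
      · rw [← h]; rintro rfl; exact hj hv
    · refine ⟨v, fun j hj => ⟨?_, ?_⟩⟩
      · rintro rfl; exact hj hv
      · rw [← h]; rintro rfl; exact hj hu


lemma mv_sum_lt {x y : ZMod (2*m+1) → ℕ} (h : Mv m x y) : ∑ j, y j < ∑ j, x j := by
  obtain ⟨hne, hle, _⟩ := h
  obtain ⟨j0, hj0⟩ := Function.ne_iff.mp hne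
  exact Finset.sum_lt_sum (fun i _ => hle i) ⟨j0, Finset.mem_univ _, lt_of_le_of_ne (hle j0) hj0⟩

lemma soundness (hm : 1 < m) {n y : ZMod (2*m+1) → ℕ} (hn : PP m n) (hmv : Mv m n y) :
    ¬ PP m y := by
  rintro ⟨z', c', hy⟩
  obtain ⟨z, c, hnp⟩ := hn
  have hsn := pat_sum hm hnp
  have hsy := pat_sum hm hy
  have hlt : ∑ j, y j < ∑ j, n j := mv_sum_lt hmv
  have hcc : c' < c := by
    rw [hsn, hsy] at hlt
    by_contra hcon
    push_neg at hcon
    have := Nat.mul_le_mul_left (2*m-1) hcon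
    omega
  obtain ⟨hn0, hns, hng⟩ := hnp
  obtain ⟨hne, hle, s, ⟨hs1, hs2⟩, p, hav⟩ := hmv
  have hup : y p = n p := by by_contra h; exact (hav p h).1 rfl
  have hvp : y (p + (s : ZMod (2*m+1))) = n (p + (s : ZMod (2*m+1))) := by
    by_contra h; exact (hav _ h).2 rfl
  have hyb : ∀ j, y j ≤ c' := pat_le hy
  have htrip : ∀ w : ZMod (2*m+1), y w = n w →
      w = z ∨ w = z + (m : ZMod (2*m+1)) ∨ w = z + (m : ZMod (2*m+1)) + 1 := by
    intro w hw
    by_contra hcon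
    push_neg at hcon
    have h1 := hng w hcon.1 hcon.2.1 hcon.2.2
    have h2 : n w ≤ c' := hw ▸ hyb w
    omega
  have hcan : ∀ a b : ℕ, a < 2*m+1 → b < 2*m+1 →
      z + (a : ZMod (2*m+1)) = z + (b : ZMod (2*m+1)) → a = b :=
    fun a b ha hb h => (zeq ha hb).mp (add_left_cancel h)
  have hNcast : (m : ZMod (2*m+1)) + (m : ZMod (2*m+1)) + 1 = 0 := by
    have := ZMod.natCast_self (2*m+1)
    push_cast at this
    linear_combination this
  have hkey : p = z + (m : ZMod (2*m+1)) ∧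
      p + (s : ZMod (2*m+1)) = z + (m : ZMod (2*m+1)) + 1 := by
    rcases htrip p hup with h1 | h1 | h1 <;> rcases htrip _ hvp with h2 | h2 | h2 <;>
      rw [h1] at h2
    · exfalso
      have := hcan (0+s) 0 (by omega) (by omega)
        (by push_cast; linear_combination h2)
      omega
    · exfalso
      have := hcan (0+s) m (by omega) (by omega)
        (by push_cast; linear_combination h2)
      omega
    · exfalso
      have := hcan (0+s) (m+1) (by omega) (by omega)
        (by push_cast; linear_combination h2)
      omega
    · exfalso
      have := hcan (m+s) 0 (by omega) (by omega)
        (by push_cast; linear_combination h2)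
      omega
    · exfalso
      have := hcan (m+s) m (by omega) (by omega)
        (by push_cast; linear_combination h2)
      omega
    · exact ⟨h1, h1 ▸ h2⟩
    · exfalso
      have := hcan (m+1+s) 0 (by omega) (by omega)
        (by push_cast; linear_combination h2)
      omega
    · exfalso
      have := hcan (m+1+s) m (by omega) (by omega)
        (by push_cast; linear_combination h2)
      omega
    · exfalso
      have := hcan (m+1+s) (m+1) (by omega) (by omega)
        (by push_cast; linear_combination h2)
      omega
  have hk1 : y (z + (m : ZMod (2*m+1))) = n (z + (m : ZMod (2*m+1))) := hkey.1 ▸ hup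
  have hk2 : y (z + (m : ZMod (2*m+1)) + 1) = n (z + (m : ZMod (2*m+1)) + 1) := by
    rw [← hkey.2, hvp, hkey.1]
  have hsumc : y (z + (m : ZMod (2*m+1))) + y (z + (m : ZMod (2*m+1)) + 1) = c := by
    rw [hk1, hk2, hns]
  have hyz : y z = 0 := Nat.le_antisymm (hn0 ▸ hle z) (Nat.zero_le _)
  by_cases hz1 : z = z'
  · subst hz1
    rw [hy.2.1] at hsumc
    omega
  by_cases hz2 : z = z' + (m : ZMod (2*m+1))
  · have hzz : z + (m : ZMod (2*m+1)) + 1 = z' := by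
      rw [hz2]; push_cast
      linear_combination hNcast
    have := hyb (z + (m : ZMod (2*m+1)))
    rw [hzz, hy.1] at hsumc
    omega
  by_cases hz3 : z = z' + (m : ZMod (2*m+1)) + 1
  · have hzz : z + (m : ZMod (2*m+1)) = z' := by
      rw [hz3]; push_cast
      linear_combination hNcast
    have := hyb (z' + 1)
    rw [hzz, hy.1] at hsumc
    omega
  · have hc0 : c' = 0 := by
      have := hy.2.2 z hz1 hz2 hz3
      omega
    have h1 := hyb (z + (m : ZMod (2*m+1)))
    have h2 := hyb (z + (m : ZMod (2*m+1)) + 1)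
    omega

lemma leaf (hm : 1 < m) (n : ZMod (2*m+1) → ℕ) (hn : ¬ PP m n) (z : ZMod (2*m+1)) (a b c : ℕ)
    (hab : a + b = c) (ha : a ≤ n (z + (m : ZMod (2*m+1))))
    (hb : b ≤ n (z + (m : ZMod (2*m+1)) + 1))
    (hc : ∀ j, j ≠ z → j ≠ z + (m : ZMod (2*m+1)) → j ≠ z + (m : ZMod (2*m+1)) + 1 → c ≤ n j)
    (u v : ZMod (2*m+1)) (hu : mk m z a b c u = n u) (hv : mk m z a b c v = n v)
    (hg : good m u v) : ∃ y, Mv m n y ∧ PP m y :=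
  have hpat := pat_mk hm z hab
  ⟨mk m z a b c, move_mk hm n z a b c hab ha hb hc u v hu hv hg
    (fun h => hn ⟨z, c, h ▸ hpat⟩), z, c, hpat⟩

lemma completeness (hm : 1 < m) (n : ZMod (2*m+1) → ℕ) (hn : ¬ PP m n) :
    ∃ y, Mv m n y ∧ PP m y := by
  classical
  have hN : (m : ZMod (2*m+1)) + (m : ZMod (2*m+1)) + 1 = 0 := by
    have := ZMod.natCast_self (2*m+1)
    push_cast at this
    linear_combination this
  obtain ⟨q, -, hqmin'⟩ :=
    Finset.exists_min_image Finset.univ n ⟨0, Finset.mem_univ 0⟩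
  have ht : ∀ j, n q ≤ n j := fun j => hqmin' j (Finset.mem_univ j)
  -- cancellation helper
  have hne2 : ∀ a b : ℕ, a < 2*m+1 → b < 2*m+1 → a ≠ b →
      q + (a : ZMod (2*m+1)) ≠ q + (b : ZMod (2*m+1)) :=
    fun a b ha hb h e => h ((zeq ha hb).mp (add_left_cancel e))
  -- canonical forms of the special positions
  have c1 : q + 1 = q + ((1:ℕ) : ZMod (2*m+1)) := by push_cast; ring
  have cm1 : q + (m : ZMod (2*m+1)) + 1 = q + ((m+1:ℕ) : ZMod (2*m+1)) := by push_cast; ring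
  -- basic disequalities
  have d10 : q + 1 ≠ q := by
    rw [c1]; intro h; nth_rewrite 2 [show q = q + ((0:ℕ):ZMod (2*m+1)) by simp] at h
    exact hne2 1 0 (by omega) (by omega) (by omega) h
  have d1m : q + 1 ≠ q + (m : ZMod (2*m+1)) := by
    rw [c1]; exact hne2 1 m (by omega) (by omega) (by omega)
  have d1m1 : q + 1 ≠ q + (m : ZMod (2*m+1)) + 1 := by
    rw [c1, cm1]; exact hne2 1 (m+1) (by omega) (by omega) (by omega)
  have dm0 : q + (m : ZMod (2*m+1)) ≠ q := triple_ne1 hm q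
  have dm10 : q + (m : ZMod (2*m+1)) + 1 ≠ q := triple_ne2 hm q
  have dmm1 : q + (m : ZMod (2*m+1)) + 1 ≠ q + (m : ZMod (2*m+1)) := triple_ne3 hm q
  have d2m0 : q + ((2*m:ℕ) : ZMod (2*m+1)) ≠ q := by
    intro h; nth_rewrite 2 [show q = q + ((0:ℕ):ZMod (2*m+1)) by simp] at h
    exact hne2 (2*m) 0 (by omega) (by omega) (by omega) h
  have d2mm : q + ((2*m:ℕ) : ZMod (2*m+1)) ≠ q + (m : ZMod (2*m+1)) :=
    hne2 (2*m) m (by omega) (by omega) (by omega)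
  have d2mm1 : q + ((2*m:ℕ) : ZMod (2*m+1)) ≠ q + (m : ZMod (2*m+1)) + 1 := by
    rw [cm1]; exact hne2 (2*m) (m+1) (by omega) (by omega) (by omega)
  have d2m1 : q + ((2*m:ℕ) : ZMod (2*m+1)) ≠ q + 1 := by
    rw [c1]; exact hne2 (2*m) 1 (by omega) (by omega) (by omega)
  -- second minimum over everything except q
  obtain ⟨g0, hg0A, hg0min⟩ :=
    Finset.exists_min_image (Finset.univ.erase q) n ⟨q+1, Finset.mem_erase.mpr ⟨d10, Finset.mem_univ _⟩⟩
  have hg0q : g0 ≠ q := (Finset.mem_erase.mp hg0A).1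
  have hμ : ∀ j, j ≠ q → n g0 ≤ n j := fun j hj =>
    hg0min j (Finset.mem_erase.mpr ⟨hj, Finset.mem_univ _⟩)
  have htμ : n q ≤ n g0 := ht g0
  -- CASE 1
  by_cases hC1 : ∃ g, (g ≠ q ∧ n g = n g0) ∧
      g ≠ q + 1 ∧ g ≠ q + (m : ZMod (2*m+1)) ∧ g ≠ q + (m : ZMod (2*m+1)) + 1
  · obtain ⟨g, ⟨hgq, hgv⟩, hg1, hgm, hgm1⟩ := hC1
    -- z = q + m + 1 ; split pair (q, q+1); keep {q, g}
    have e1 : (q + (m : ZMod (2*m+1)) + 1) + (m : ZMod (2*m+1)) = q := by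
      linear_combination hN
    have e2 : (q + (m : ZMod (2*m+1)) + 1) + (m : ZMod (2*m+1)) + 1 = q + 1 := by
      linear_combination hN
    refine leaf hm n hn (q + (m : ZMod (2*m+1)) + 1) (n q) (n g0 - n q) (n g0)
      (by omega) ?_ ?_ ?_ q g ?_ ?_ ?_
    · rw [e1]
    · rw [e2]
      have := hμ (q+1) d10
      omega
    · intro j h1 h2 h3
      rw [e1] at h2
      exact hμ j h2
    · have := mk_a hm (q + (m : ZMod (2*m+1)) + 1) (n q) (n g0 - n q) (n g0)
      rwa [e1] at this
    · rw [mk_c hm _ _ _ _ hgm1 (by rwa [e1]) (by rwa [e2]), hgv]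
    · exact good_of hm hgq hgm hgm1
  -- CASE 2
  by_cases hC2 : ∃ g, (g ≠ q ∧ n g = n g0) ∧
      g ≠ q + ((2*m:ℕ) : ZMod (2*m+1)) ∧ g ≠ q + (m : ZMod (2*m+1)) ∧
      g ≠ q + (m : ZMod (2*m+1)) + 1
  · obtain ⟨g, ⟨hgq, hgv⟩, hg1, hgm, hgm1⟩ := hC2
    -- z = q + m ; split pair (q-1, q); keep {q, g}
    have e1 : (q + (m : ZMod (2*m+1))) + (m : ZMod (2*m+1)) = q + ((2*m:ℕ) : ZMod (2*m+1)) := by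
      push_cast; ring
    have e2 : (q + (m : ZMod (2*m+1))) + (m : ZMod (2*m+1)) + 1 = q := by
      linear_combination hN
    refine leaf hm n hn (q + (m : ZMod (2*m+1))) (n g0 - n q) (n q) (n g0)
      (by omega) ?_ ?_ ?_ q g ?_ ?_ ?_
    · rw [e1]
      have := hμ _ d2m0
      omega
    · rw [e2]
    · intro j h1 h2 h3
      rw [e2] at h3
      exact hμ j h3
    · have := mk_b hm (q + (m : ZMod (2*m+1))) (n g0 - n q) (n q) (n g0)
      rwa [e2] at this
    · rw [mk_c hm _ _ _ _ hgm (by rwa [e1]) (by rwa [e2]), hgv]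
    · exact good_of hm hgq hgm hgm1
  -- CASE 3
  push_neg at hC1 hC2
  have hbig : ∀ j, j ≠ q → j ≠ q + (m : ZMod (2*m+1)) → j ≠ q + (m : ZMod (2*m+1)) + 1 →
      n g0 < n j := by
    intro j h0 h2 h3
    rcases Nat.lt_or_ge (n g0) (n j) with h | h
    · exact h
    have hj : n j = n g0 := le_antisymm h (hμ j h0)
    have k1 := hC1 j ⟨h0, hj⟩
    have k2 := hC2 j ⟨h0, hj⟩
    by_cases j1 : j = q + 1
    · by_cases j2 : j = q + ((2*m:ℕ) : ZMod (2*m+1))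
      · rw [j1] at j2; exact absurd j2.symm d2m1
      · exact absurd (k2 j2 h2) h3
    · exact absurd (k1 j1 h2) h3
  have hside : n (q + (m : ZMod (2*m+1))) = n g0 ∨ n (q + (m : ZMod (2*m+1)) + 1) = n g0 := by
    by_cases s1 : g0 = q + (m : ZMod (2*m+1))
    · left; rw [← s1]
    by_cases s2 : g0 = q + (m : ZMod (2*m+1)) + 1
    · right; rw [← s2]
    · exact absurd rfl (Nat.ne_of_gt (hbig g0 hg0q s1 s2))
  -- third minimum : over generic positions wrt q
  obtain ⟨h0, hh0G, hh0min⟩ :=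
    Finset.exists_min_image
      (Finset.univ.filter fun j => j ≠ q ∧ j ≠ q + (m : ZMod (2*m+1)) ∧
        j ≠ q + (m : ZMod (2*m+1)) + 1) n
      ⟨q+1, Finset.mem_filter.mpr ⟨Finset.mem_univ _, d10, d1m, d1m1⟩⟩
  obtain ⟨-, hh0a, hh0b, hh0c⟩ := Finset.mem_filter.mp hh0G
  have hM : ∀ j, j ≠ q → j ≠ q + (m : ZMod (2*m+1)) → j ≠ q + (m : ZMod (2*m+1)) + 1 →
      n h0 ≤ n j := fun j h1 h2 h3 =>
    hh0min j (Finset.mem_filter.mpr ⟨Finset.mem_univ _, h1, h2, h3⟩)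
  have hμM : n g0 < n h0 := hbig h0 hh0a hh0b hh0c
  -- CASE 3a
  by_cases hσ : n (q + (m : ZMod (2*m+1))) + n (q + (m : ZMod (2*m+1)) + 1) ≤ n h0
  · refine leaf hm n hn q (n (q + (m : ZMod (2*m+1)))) (n (q + (m : ZMod (2*m+1)) + 1))
      (n (q + (m : ZMod (2*m+1))) + n (q + (m : ZMod (2*m+1)) + 1)) rfl le_rfl le_rfl
      (fun j h1 h2 h3 => le_trans hσ (hM j h1 h2 h3)) (q + (m : ZMod (2*m+1)))
      (q + (m : ZMod (2*m+1)) + 1) (mk_a hm _ _ _ _) (mk_b hm _ _ _ _)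
      ⟨1, ⟨le_rfl, by omega⟩, Or.inl (by push_cast; ring)⟩
  push_neg at hσ
  -- CASE 3b
  by_cases ht0 : n q = 0
  · refine leaf hm n hn q (min (n (q + (m : ZMod (2*m+1)))) (n h0))
      (n h0 - min (n (q + (m : ZMod (2*m+1)))) (n h0)) (n h0)
      (by omega) (by omega) (by omega) hM q h0 ?_ ?_ ?_
    · rw [mk_z hm, ht0]
    · rw [mk_c hm _ _ _ _ hh0a hh0b hh0c]
    · exact good_of hm hh0a hh0b hh0c
  -- CASE 3c
  by_cases hc3 : n (q + (m : ZMod (2*m+1))) ≤ n h0 ∧ ∃ h,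
      (h ≠ q ∧ h ≠ q + (m : ZMod (2*m+1)) ∧ h ≠ q + (m : ZMod (2*m+1)) + 1) ∧
      n h = n h0 ∧ h ≠ q + ((2*m:ℕ) : ZMod (2*m+1))
  · obtain ⟨hle3, h, ⟨ha1, ha2, ha3⟩, hval, hne3⟩ := hc3
    have e1 : (q + (m : ZMod (2*m+1))) + (m : ZMod (2*m+1)) = q + ((2*m:ℕ) : ZMod (2*m+1)) := by
      push_cast; ring
    have e2 : (q + (m : ZMod (2*m+1))) + (m : ZMod (2*m+1)) + 1 = q := by
      linear_combination hN
    refine leaf hm n hn q (n (q + (m : ZMod (2*m+1)))) (n h0 - n (q + (m : ZMod (2*m+1))))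
      (n h0) (by omega) le_rfl (by omega) hM (q + (m : ZMod (2*m+1))) h
      (mk_a hm _ _ _ _) ?_ ?_
    · rw [mk_c hm _ _ _ _ ha1 ha2 ha3, hval]
    · refine good_of hm ha2 ?_ ?_
      · rwa [e1]
      · rwa [e2]
  -- CASE 3d
  by_cases hd3 : n (q + (m : ZMod (2*m+1)) + 1) ≤ n h0 ∧ ∃ h,
      (h ≠ q ∧ h ≠ q + (m : ZMod (2*m+1)) ∧ h ≠ q + (m : ZMod (2*m+1)) + 1) ∧
      n h = n h0 ∧ h ≠ q + 1
  · obtain ⟨hle3, h, ⟨ha1, ha2, ha3⟩, hval, hne3⟩ := hd3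
    have e1 : (q + (m : ZMod (2*m+1)) + 1) + (m : ZMod (2*m+1)) = q := by
      linear_combination hN
    have e2 : (q + (m : ZMod (2*m+1)) + 1) + (m : ZMod (2*m+1)) + 1 = q + 1 := by
      linear_combination hN
    refine leaf hm n hn q (n h0 - n (q + (m : ZMod (2*m+1)) + 1))
      (n (q + (m : ZMod (2*m+1)) + 1)) (n h0) (by omega) (by omega) le_rfl hM
      (q + (m : ZMod (2*m+1)) + 1) h (mk_b hm _ _ _ _) ?_ ?_
    · rw [mk_c hm _ _ _ _ ha1 ha2 ha3, hval]
    · refine good_of hm ha3 ?_ ?_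
      · rwa [e1]
      · rwa [e2]
  -- CASE 3e
  push_neg at hc3 hd3
  by_cases hE : n (q + (m : ZMod (2*m+1))) ≤ n h0
  · -- E1 : the small opposite pile is q+m ; M attained only at q-1
    have hh0eq : h0 = q + ((2*m:ℕ) : ZMod (2*m+1)) := hc3 hE h0 ⟨hh0a, hh0b, hh0c⟩ rfl
    have hqm1M : n h0 < n (q + (m : ZMod (2*m+1)) + 1) := by
      rcases Nat.lt_or_ge (n h0) (n (q + (m : ZMod (2*m+1)) + 1)) with h | h
      · exact h
      · exfalso
        have := hd3 h h0 ⟨hh0a, hh0b, hh0c⟩ rfl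
        rw [hh0eq] at this
        exact d2m1 this
    have e1 : (q + (m : ZMod (2*m+1))) + (m : ZMod (2*m+1)) = q + ((2*m:ℕ) : ZMod (2*m+1)) := by
      push_cast; ring
    have e2 : (q + (m : ZMod (2*m+1))) + (m : ZMod (2*m+1)) + 1 = q := by
      linear_combination hN
    obtain ⟨g3, hg3G, hg3min'⟩ :=
      Finset.exists_min_image
        (Finset.univ.filter fun j => j ≠ q + (m : ZMod (2*m+1)) ∧
          j ≠ q + ((2*m:ℕ) : ZMod (2*m+1)) ∧ j ≠ q) n
        ⟨q + (m : ZMod (2*m+1)) + 1, Finset.mem_filter.mpr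
          ⟨Finset.mem_univ _, dmm1, Ne.symm d2mm1, dm10⟩⟩
    obtain ⟨-, hg3a, hg3b, hg3c⟩ := Finset.mem_filter.mp hg3G
    have hmin3 : ∀ j, j ≠ q + (m : ZMod (2*m+1)) → j ≠ q + ((2*m:ℕ) : ZMod (2*m+1)) →
        j ≠ q → n g3 ≤ n j := fun j h1 h2 h3 =>
      hg3min' j (Finset.mem_filter.mpr ⟨Finset.mem_univ _, h1, h2, h3⟩)
    have hMM3 : n h0 < n g3 := by
      by_cases hg : g3 = q + (m : ZMod (2*m+1)) + 1
      · rw [hg]; exact hqm1M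
      · rcases Nat.lt_or_ge (n h0) (n g3) with h | h
        · exact h
        · exfalso
          have heq : n g3 = n h0 := le_antisymm h (hM g3 hg3c hg3a hg)
          exact hg3b (hc3 hE g3 ⟨hg3c, hg3a, hg⟩ heq)
    have hval2m : n (q + ((2*m:ℕ) : ZMod (2*m+1))) = n h0 := by rw [← hh0eq]
    by_cases hF1 : n h0 + n q ≤ n g3
    · refine leaf hm n hn (q + (m : ZMod (2*m+1))) (n h0) (n q) (n h0 + n q) rfl ?_ ?_ ?_
        (q + ((2*m:ℕ) : ZMod (2*m+1))) q ?_ ?_ ?_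
      · rw [e1, hval2m]
      · rw [e2]
      · intro j h1 h2 h3
        rw [e1] at h2; rw [e2] at h3
        exact le_trans hF1 (hmin3 j h1 h2 h3)
      · have := mk_a hm (q + (m : ZMod (2*m+1))) (n h0) (n q) (n h0 + n q)
        rw [e1] at this; rw [this, hval2m]
      · have := mk_b hm (q + (m : ZMod (2*m+1))) (n h0) (n q) (n h0 + n q)
        rwa [e2] at this
      · exact ⟨1, ⟨le_rfl, by omega⟩, Or.inl (by push_cast; linear_combination -hN)⟩
    push_neg at hF1
    by_cases hF2a : ∃ g, (g ≠ q + (m : ZMod (2*m+1)) ∧ g ≠ q + ((2*m:ℕ) : ZMod (2*m+1)) ∧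
        g ≠ q) ∧ n g = n g3 ∧ g ≠ q + (m : ZMod (2*m+1)) + 1
    · obtain ⟨g, ⟨hb1, hb2, hb3⟩, hbv, hb4⟩ := hF2a
      refine leaf hm n hn (q + (m : ZMod (2*m+1))) (n g3 - n q) (n q) (n g3)
        (by have := ht g3; omega) ?_ ?_ ?_ q g ?_ ?_ ?_
      · rw [e1, hval2m]; omega
      · rw [e2]
      · intro j h1 h2 h3
        rw [e1] at h2; rw [e2] at h3
        exact hmin3 j h1 h2 h3
      · have := mk_b hm (q + (m : ZMod (2*m+1))) (n g3 - n q) (n q) (n g3)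
        rwa [e2] at this
      · rw [mk_c hm _ _ _ _ hb1 (by rwa [e1]) (by rwa [e2]), hbv]
      · exact good_of hm hb3 hb1 hb4
    · push_neg at hF2a
      have hg3eq : g3 = q + (m : ZMod (2*m+1)) + 1 := hF2a g3 ⟨hg3a, hg3b, hg3c⟩ rfl
      have hvg3 : n (q + (m : ZMod (2*m+1)) + 1) = n g3 := by rw [← hg3eq]
      refine leaf hm n hn (q + (m : ZMod (2*m+1))) (n h0) (n g3 - n h0) (n g3)
        (by omega) ?_ ?_ ?_ (q + (m : ZMod (2*m+1)) + 1) (q + ((2*m:ℕ) : ZMod (2*m+1)))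
        ?_ ?_ ?_
      · rw [e1, hval2m]
      · rw [e2]; omega
      · intro j h1 h2 h3
        rw [e1] at h2; rw [e2] at h3
        exact hmin3 j h1 h2 h3
      · rw [mk_c hm _ _ _ _ dmm1 (by rw [e1]; exact Ne.symm d2mm1) (by rw [e2]; exact dm10),
          hvg3]
      · have := mk_a hm (q + (m : ZMod (2*m+1))) (n h0) (n g3 - n h0) (n g3)
        rw [e1] at this; rw [this, hval2m]
      · refine good_of hm d2mm1 ?_ ?_
        · rw [show (q + (m : ZMod (2*m+1)) + 1) + (m : ZMod (2*m+1)) = q from by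
            linear_combination hN]
          exact d2m0
        · rw [show (q + (m : ZMod (2*m+1)) + 1) + (m : ZMod (2*m+1)) + 1 = q + 1 from by
            linear_combination hN]
          exact d2m1
  · -- E2 : the small opposite pile is q+m+1 ; M attained only at q+1
    push_neg at hE
    have h1M : n (q + (m : ZMod (2*m+1)) + 1) ≤ n h0 := by
      rcases hside with h | h
      · omega
      · omega
    have hh0eq : h0 = q + 1 := hd3 h1M h0 ⟨hh0a, hh0b, hh0c⟩ rfl
    have hval1 : n (q + 1) = n h0 := by rw [← hh0eq]
    have e1 : (q + (m : ZMod (2*m+1)) + 1) + (m : ZMod (2*m+1)) = q := by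
      linear_combination hN
    have e2 : (q + (m : ZMod (2*m+1)) + 1) + (m : ZMod (2*m+1)) + 1 = q + 1 := by
      linear_combination hN
    obtain ⟨g3, hg3G, hg3min'⟩ :=
      Finset.exists_min_image
        (Finset.univ.filter fun j => j ≠ q + (m : ZMod (2*m+1)) + 1 ∧ j ≠ q ∧ j ≠ q + 1) n
        ⟨q + (m : ZMod (2*m+1)), Finset.mem_filter.mpr
          ⟨Finset.mem_univ _, Ne.symm dmm1, dm0, Ne.symm d1m⟩⟩
    obtain ⟨-, hg3a, hg3b, hg3c⟩ := Finset.mem_filter.mp hg3G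
    have hmin3 : ∀ j, j ≠ q + (m : ZMod (2*m+1)) + 1 → j ≠ q → j ≠ q + 1 →
        n g3 ≤ n j := fun j h1 h2 h3 =>
      hg3min' j (Finset.mem_filter.mpr ⟨Finset.mem_univ _, h1, h2, h3⟩)
    have hMM3 : n h0 < n g3 := by
      by_cases hg : g3 = q + (m : ZMod (2*m+1))
      · rw [hg]; exact hE
      · rcases Nat.lt_or_ge (n h0) (n g3) with h | h
        · exact h
        · exfalso
          have heq : n g3 = n h0 := le_antisymm h (hM g3 hg3b hg hg3a)
          exact hg3c (hd3 h1M g3 ⟨hg3b, hg, hg3a⟩ heq)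
    by_cases hF1 : n h0 + n q ≤ n g3
    · refine leaf hm n hn (q + (m : ZMod (2*m+1)) + 1) (n q) (n h0) (n q + n h0) rfl ?_ ?_ ?_
        q (q + 1) ?_ ?_ ?_
      · rw [e1]
      · rw [e2, hval1]
      · intro j h1 h2 h3
        rw [e1] at h2; rw [e2] at h3
        exact le_trans (by omega) (hmin3 j h1 h2 h3)
      · have := mk_a hm (q + (m : ZMod (2*m+1)) + 1) (n q) (n h0) (n q + n h0)
        rwa [e1] at this
      · have := mk_b hm (q + (m : ZMod (2*m+1)) + 1) (n q) (n h0) (n q + n h0)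
        rw [e2] at this; rw [this, hval1]
      · exact ⟨1, ⟨le_rfl, by omega⟩, Or.inl (by push_cast; ring)⟩
    push_neg at hF1
    by_cases hF2a : ∃ g, (g ≠ q + (m : ZMod (2*m+1)) + 1 ∧ g ≠ q ∧ g ≠ q + 1) ∧
        n g = n g3 ∧ g ≠ q + (m : ZMod (2*m+1))
    · obtain ⟨g, ⟨hb1, hb2, hb3⟩, hbv, hb4⟩ := hF2a
      refine leaf hm n hn (q + (m : ZMod (2*m+1)) + 1) (n q) (n g3 - n q) (n g3)
        (by have := ht g3; omega) ?_ ?_ ?_ q g ?_ ?_ ?_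
      · rw [e1]
      · rw [e2, hval1]; omega
      · intro j h1 h2 h3
        rw [e1] at h2; rw [e2] at h3
        exact hmin3 j h1 h2 h3
      · have := mk_a hm (q + (m : ZMod (2*m+1)) + 1) (n q) (n g3 - n q) (n g3)
        rwa [e1] at this
      · rw [mk_c hm _ _ _ _ hb1 (by rwa [e1]) (by rwa [e2]), hbv]
      · exact good_of hm hb2 hb4 hb1
    · push_neg at hF2a
      have hg3eq : g3 = q + (m : ZMod (2*m+1)) := hF2a g3 ⟨hg3a, hg3b, hg3c⟩ rfl
      have hvg3 : n (q + (m : ZMod (2*m+1))) = n g3 := by rw [← hg3eq]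
      refine leaf hm n hn (q + (m : ZMod (2*m+1)) + 1) (n g3 - n h0) (n h0) (n g3)
        (by omega) ?_ ?_ ?_ (q + 1) (q + (m : ZMod (2*m+1))) ?_ ?_ ?_
      · rw [e1]; omega
      · rw [e2, hval1]
      · intro j h1 h2 h3
        rw [e1] at h2; rw [e2] at h3
        exact hmin3 j h1 h2 h3
      · have := mk_b hm (q + (m : ZMod (2*m+1)) + 1) (n g3 - n h0) (n h0) (n g3)
        rw [e2] at this; rw [this, hval1]
      · rw [mk_c hm _ _ _ _ (Ne.symm dmm1) (by rw [e1]; exact dm0) (by rw [e2]; exact Ne.symm d1m),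
          hvg3]
      · refine good_of hm (Ne.symm d1m) ?_ ?_
        · rw [show (q + 1) + (m : ZMod (2*m+1)) = q + (m : ZMod (2*m+1)) + 1 from by ring]
          exact Ne.symm dmm1
        · rw [show (q + 1) + (m : ZMod (2*m+1)) + 1 = q + ((m+2 : ℕ) : ZMod (2*m+1)) from by
            push_cast; ring]
          exact hne2 m (m+2) (by omega) (by omega) (by omega)

lemma noNP {α : Type*} {move : α → α → Prop} {x : α} (h : IsN move x) : ¬ IsP move x := by
  induction h with
  | intro x y hxy hy ih =>
    intro hP
    cases hP y hxy with
    | intro _ w hyw hw => exact ih w hyw hw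

lemma pp_iff_isP (hm : 1 < m) (n : ZMod (2*m+1) → ℕ) : IsP (Mv m) n ↔ PP m n := by
  have H : ∀ k (n : ZMod (2*m+1) → ℕ), ∑ j, n j ≤ k →
      (PP m n → IsP (Mv m) n) ∧ (¬PP m n → IsN (Mv m) n) := by
    intro k
    induction k with
    | zero =>
      intro n hk
      constructor
      · intro hP y hy
        exact absurd (mv_sum_lt hy) (by omega)
      · intro hnP
        obtain ⟨y, hmv, hPy⟩ := completeness hm n hnP
        refine IsN.intro n y hmv fun z hz => ?_
        have l1 := mv_sum_lt hmv
        have l2 := mv_sum_lt hz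
        exact absurd l1 (by omega)
    | succ k ih =>
      intro n hk
      constructor
      · intro hP y hy
        have hlt := mv_sum_lt hy
        exact (ih y (by omega)).2 (soundness hm hP hy)
      · intro hnP
        obtain ⟨y, hmv, hPy⟩ := completeness hm n hnP
        have l1 := mv_sum_lt hmv
        refine IsN.intro n y hmv fun z hz => ?_
        have l2 := mv_sum_lt hz
        exact (ih z (by omega)).2 (soundness hm hPy hz)
  constructor
  · intro h
    by_contra hnP
    exact noNP ((H (∑ j, n j) n le_rfl).2 hnP) h
  · intro h
    exact (H (∑ j, n j) n le_rfl).1 h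

lemma mv_iff (hm : 1 < m) (hp : Nat.Prime (2*m+1)) (x y : ZMod (2*m+1) → ℕ) :
    ecnMove (2*m+1) {s | 1 ≤ s ∧ s ≤ m-1} (2*m-1) x y ↔ Mv m x y := by
  constructor
  · rintro ⟨hne, hle, s, hsS, i, hmov⟩
    obtain ⟨hs1, hs2⟩ := hsS
    have hcastne : ∀ t t' : ℕ, t < t' → t' ≤ 2*m →
        ((i + t*s : ℕ) : ZMod (2*m+1)) ≠ ((i + t'*s : ℕ) : ZMod (2*m+1)) := by
      intro t t' htt ht' heq
      rw [ZMod.natCast_eq_natCast_iff] at heq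
      have h2 : t*s ≡ t'*s [MOD 2*m+1] := Nat.ModEq.add_left_cancel' i heq
      have h3 : (2*m+1) ∣ t'*s - t*s :=
        (Nat.modEq_iff_dvd' (Nat.mul_le_mul_right s (le_of_lt htt))).mp h2
      rw [← Nat.sub_mul] at h3
      rcases (Nat.Prime.dvd_mul hp).mp h3 with h4 | h4
      · have := Nat.le_of_dvd (by omega) h4; omega
      · have := Nat.le_of_dvd (by omega) h4; omega
    refine ⟨hne, hle, s, ⟨hs1, hs2⟩, ((i + (2*m-1)*s : ℕ) : ZMod (2*m+1)), ?_⟩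
    intro j hj
    obtain ⟨t, ht, hjt⟩ := hmov j hj
    have hj' : j = ((i + t*s : ℕ) : ZMod (2*m+1)) := by
      have hv : ((i + t*s : ℕ) : ZMod (2*m+1)).val = (i + t*s) % (2*m+1) :=
        ZMod.val_natCast _ _
      exact ZMod.val_injective _ (hjt.trans hv.symm)
    constructor
    · rw [hj']; exact hcastne t (2*m-1) (by omega) (by omega)
    · rw [hj']
      have hstep : ((i + (2*m-1)*s : ℕ) : ZMod (2*m+1)) + (s : ZMod (2*m+1))
          = ((i + (2*m)*s : ℕ) : ZMod (2*m+1)) := by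
        push_cast [Nat.cast_sub (show 1 ≤ 2*m by omega)]
        ring
      rw [hstep]
      exact hcastne t (2*m) (by omega) (by omega)
  · rintro ⟨hne, hle, s, ⟨hs1, hs2⟩, p, hav⟩
    haveI : Fact (Nat.Prime (2*m+1)) := ⟨hp⟩
    have hs0 : (s : ZMod (2*m+1)) ≠ 0 := by
      have := @zne m s 0 (by omega) (by omega) (by omega)
      simpa using this
    obtain ⟨i, hicast⟩ : ∃ i : ℕ, ((i : ℕ) : ZMod (2*m+1)) = p + ((2*s : ℕ) : ZMod (2*m+1)) :=
      ⟨_, zcast_val _⟩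
    refine ⟨hne, hle, s, ⟨hs1, hs2⟩, i, ?_⟩
    intro j hj
    set t0 : ZMod (2*m+1) :=
      (Sub.sub (α := ZMod (2*m+1)) j (i : ZMod (2*m+1))) * ((s : ZMod (2*m+1)))⁻¹ with ht0
    have hj0 : @Eq (ZMod (2*m+1)) j ((i : ZMod (2*m+1)) + t0 * (s : ZMod (2*m+1))) := by
      rw [ht0, mul_assoc, inv_mul_cancel₀ hs0, mul_one]
      exact (add_sub_cancel _ _).symm
    have hz : ((2*m+1 : ℕ) : ZMod (2*m+1)) = 0 := ZMod.natCast_self _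
    have hp1 : p = (i : ZMod (2*m+1)) + ((2*m-1 : ℕ) : ZMod (2*m+1)) * (s : ZMod (2*m+1)) := by
      rw [hicast]
      push_cast [Nat.cast_sub (show 1 ≤ 2*m by omega)] at hz ⊢
      linear_combination (-(s : ZMod (2*m+1))) * hz
    have hp2 : p + (s : ZMod (2*m+1)) =
        (i : ZMod (2*m+1)) + ((2*m : ℕ) : ZMod (2*m+1)) * (s : ZMod (2*m+1)) := by
      rw [hicast]
      push_cast at hz ⊢
      linear_combination (-(s : ZMod (2*m+1))) * hz
    refine ⟨t0.val, ?_, ?_⟩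
    · have hlt : t0.val < 2*m+1 := zval_lt _
      have hne1 : t0.val ≠ 2*m-1 := by
        intro h
        exact (hav j hj).1 (by rw [hj0, ← zcast_val t0, h, ← hp1])
      have hne2 : t0.val ≠ 2*m := by
        intro h
        exact (hav j hj).2 (by rw [hj0, ← zcast_val t0, h, ← hp2])
      omega
    · have hjc : @Eq (ZMod (2*m+1)) j ((i + t0.val * s : ℕ) : ZMod (2*m+1)) := by
        push_cast
        simp only [zcast_val]
        exact hj0
      show @ZMod.val (2*m+1) j = _
      rw [hjc]
      exact ZMod.val_natCast _ _

lemma pp_iff_cyc (hm : 1 < m) (n : ZMod (2*m+1) → ℕ) :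
    PP m n ↔ cyc (2*m+1) (fun x =>
        x ⟨0, Nat.succ_pos _⟩ = 0 ∧
        ∃ c : ℕ, (∀ j : Fin (2*m+1), 1 ≤ j.1 → j.1 ≤ m - 1 → x j = c) ∧
          x ⟨m, Nat.lt_succ_of_le (Nat.le_mul_of_pos_left m Nat.zero_lt_two)⟩ +
            x ⟨m + 1, Nat.succ_lt_succ (Nat.lt_of_lt_of_le
              (Nat.lt_add_of_pos_right (Nat.lt_trans Nat.zero_lt_one hm))
              (Nat.le_of_eq (Nat.two_mul m).symm))⟩ = c ∧
          (∀ j : Fin (2*m+1), m + 2 ≤ j.1 → x j = c)) n := by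
  have hN : (m : ZMod (2*m+1)) + (m : ZMod (2*m+1)) + 1 = 0 := by
    have := ZMod.natCast_self (2*m+1)
    push_cast at this
    linear_combination this
  have hbr : ∀ (a : ℕ) (h : a % (2*m+1) < 2*m+1),
      n ⟨a % (2*m+1), h⟩ = n ((a : ℕ) : ZMod (2*m+1)) := by
    intro a h
    rfl
  constructor
  · rintro ⟨z, c, hp0, hps, hpg⟩
    have hcanz : ∀ a b : ℕ, a < 2*m+1 → b < 2*m+1 →
        z + (a : ZMod (2*m+1)) = z + (b : ZMod (2*m+1)) → a = b :=
      fun a b ha hb h => (zeq ha hb).mp (add_left_cancel h)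
    have hgen : ∀ a : ℕ, a < 2*m+1 → a ≠ 0 → a ≠ m → a ≠ m+1 →
        n (z + (a : ZMod (2*m+1))) = c := by
      intro a ha h1 h2 h3
      refine hpg _ (fun h => h1 (hcanz a 0 ha (by omega) (by simpa using h)))
        (fun h => h2 (hcanz a m ha (by omega) h))
        (fun h => h3 (hcanz a (m+1) ha (by omega) (h.trans (by push_cast; ring))))
    have he : ∀ a : ℕ, ((a + z.val : ℕ) : ZMod (2*m+1)) = z + (a : ZMod (2*m+1)) := by
      intro a
      push_cast [zcast_val]
      ring
    refine ⟨z.val, Or.inl ?_⟩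
    simp only [hbr, Fin.val_mk, Nat.zero_add, he]
    refine ⟨?_, c, ?_, ?_, ?_⟩
    · simpa using hp0
    · intro j hj1 hj2
      exact hgen j.1 (by omega) (by omega) (by omega) (by omega)
    · rw [show z + ((m+1 : ℕ) : ZMod (2*m+1)) = z + (m : ZMod (2*m+1)) + 1 by push_cast; ring]
      exact hps
    · intro j hj1
      have := j.isLt
      exact hgen j.1 (by omega) (by omega) (by omega) (by omega)
  · rintro ⟨r, hrot | hrefl⟩
    · obtain ⟨h0, c, h1, h2, h3⟩ := hrot
      simp only [hbr, Fin.val_mk, Nat.zero_add] at h0 h1 h2 h3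
      refine ⟨(r : ZMod (2*m+1)), c, by exact h0, ?_, ?_⟩
      · rw [show ((r : ZMod (2*m+1)) + (m : ZMod (2*m+1)) + 1) = ((m + 1 + r : ℕ) : ZMod (2*m+1))
            by push_cast; ring,
          show ((r : ZMod (2*m+1)) + (m : ZMod (2*m+1))) = ((m + r : ℕ) : ZMod (2*m+1))
            by push_cast; ring]
        exact h2
      · intro j hj1 hj2 hj3
        have hk : (((j - ((r : ℕ) : ZMod (2*m+1))).val : ℕ) : ZMod (2*m+1))
            = j - ((r : ℕ) : ZMod (2*m+1)) := zcast_val _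
        set k := (j - ((r : ℕ) : ZMod (2*m+1))).val with hkdef
        have hjk : j = ((r : ℕ) : ZMod (2*m+1)) + ((k : ℕ) : ZMod (2*m+1)) := by
          rw [hk]; ring
        have hklt : k < 2*m+1 := zval_lt _
        have hk0 : k ≠ 0 := fun h => hj1 (by rw [hjk, h]; simp)
        have hkm : k ≠ m := fun h => hj2 (by rw [hjk, h])
        have hkm1 : k ≠ m+1 := fun h => hj3 (by rw [hjk, h]; push_cast; ring)
        have he : ((k + r : ℕ) : ZMod (2*m+1))
            = ((r : ℕ) : ZMod (2*m+1)) + ((k : ℕ) : ZMod (2*m+1)) := by push_cast; ring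
        rcases le_or_gt k (m-1) with hc | hc
        · have := h1 ⟨k, by omega⟩ (by exact (by omega : 1 ≤ k)) (by exact (by omega : k ≤ m-1))
          simp only [Fin.val_mk] at this
          rwa [he, ← hjk] at this
        · have := h3 ⟨k, by omega⟩ (by exact (by omega : m+2 ≤ k))
          simp only [Fin.val_mk] at this
          rwa [he, ← hjk] at this
    · obtain ⟨h0, c, h1, h2, h3⟩ := hrefl
      simp only [hbr, Fin.val_mk, Nat.sub_zero] at h0 h1 h2 h3
      rw [show 2*m+1-m = m+1 by omega, show 2*m+1-(m+1) = m by omega] at h2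
      refine ⟨(r : ZMod (2*m+1)), c, ?_, ?_, ?_⟩
      · rwa [show ((r + (2*m+1) : ℕ) : ZMod (2*m+1)) = ((r : ℕ) : ZMod (2*m+1))
            by push_cast; linear_combination hN] at h0
      · rw [show ((r : ZMod (2*m+1)) + (m : ZMod (2*m+1)) + 1)
              = ((r + (m+1) : ℕ) : ZMod (2*m+1)) by push_cast; ring,
          show ((r : ZMod (2*m+1)) + (m : ZMod (2*m+1)))
              = ((r + m : ℕ) : ZMod (2*m+1)) by push_cast; ring]
        omega
      · intro j hj1 hj2 hj3
        have hk : (((((r : ℕ) : ZMod (2*m+1)) - j).val : ℕ) : ZMod (2*m+1))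
            = ((r : ℕ) : ZMod (2*m+1)) - j := zcast_val _
        set k := (((r : ℕ) : ZMod (2*m+1)) - j).val with hkdef
        have hjk : j = ((r : ℕ) : ZMod (2*m+1)) - ((k : ℕ) : ZMod (2*m+1)) := by
          rw [hk]; ring
        have hklt : k < 2*m+1 := zval_lt _
        have hk0 : k ≠ 0 := fun h => hj1 (by rw [hjk, h]; simp)
        have hkm1 : k ≠ m+1 := fun h => hj2 (by
          rw [hjk, h]; push_cast; linear_combination -hN)
        have hkm : k ≠ m := fun h => hj3 (by
          rw [hjk, h]; push_cast; linear_combination -hN)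
        have he : ((r + (2*m+1 - k) : ℕ) : ZMod (2*m+1))
            = ((r : ℕ) : ZMod (2*m+1)) - ((k : ℕ) : ZMod (2*m+1)) := by
          push_cast [Nat.cast_sub (show k ≤ 2*m+1 by omega)]
          linear_combination hN
        rcases le_or_gt k (m-1) with hc | hc
        · have := h1 ⟨k, by omega⟩ (by exact (by omega : 1 ≤ k)) (by exact (by omega : k ≤ m-1))
          simp only [Fin.val_mk] at this
          rwa [he, ← hjk] at this
        · have := h3 ⟨k, by omega⟩ (by exact (by omega : m+2 ≤ k))
          simp only [Fin.val_mk] at this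
          rwa [he, ← hjk] at this

end ECN

theorem ecn_odd_prime_P_iff (m : ℕ) (hm : 1 < m) (hp : Nat.Prime (2 * m + 1))
    (n : Fin (2 * m + 1) → ℕ) :
    IsP (ecnMove (2 * m + 1) {s | 1 ≤ s ∧ s ≤ m - 1} (2 * m - 1)) n ↔
      cyc (2 * m + 1) (fun x =>
        x ⟨0, by omega⟩ = 0 ∧
        ∃ c : ℕ, (∀ j : Fin (2 * m + 1), 1 ≤ j.1 → j.1 ≤ m - 1 → x j = c) ∧
          x ⟨m, by omega⟩ + x ⟨m + 1, by omega⟩ = c ∧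
          (∀ j : Fin (2 * m + 1), m + 2 ≤ j.1 → x j = c)) n := by
  have hrel : ecnMove (2 * m + 1) {s | 1 ≤ s ∧ s ≤ m - 1} (2 * m - 1) = ECN.Mv m := by
    funext x y
    exact propext (ECN.mv_iff hm hp x y)
  rw [hrel]
  exact (ECN.pp_iff_isP hm n).trans (ECN.pp_iff_cyc hm n)
end

section
/- Let m > 1 be an integer and let h be the largest odd integer with h ≤ m. A position M = (n_0, ..., n_{2m-1}) in extended circular nim ECN((2m)_{1,3,...,h}, 2) is a P-position if and only if n_0 ⊕ n_2 ⊕ ... ⊕ n_{2m-2} = 0 and n_1 ⊕ n_3 ⊕ ... ⊕ n_{2m-1} = 0, where ⊕ is bitwise XOR. -/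
namespace ECNAux

def xorAll {k : ℕ} (g : Fin k → ℕ) : ℕ := (List.ofFn g).foldr (· ^^^ ·) 0

lemma foldr_xor_set (l : List ℕ) : ∀ (j : ℕ) (hj : j < l.length) (v : ℕ),
    (l.set j v).foldr (· ^^^ ·) 0 = ((l.foldr (· ^^^ ·) 0) ^^^ l[j]'hj) ^^^ v := by
  induction l with
  | nil => intro j hj v; simp at hj
  | cons h t ih =>
    intro j hj v
    match j with
    | 0 =>
      simp only [List.set, List.foldr_cons, List.getElem_cons_zero]
      rw [Nat.xor_comm h, Nat.xor_xor_cancel_right, Nat.xor_comm]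
    | j + 1 =>
      simp only [List.set, List.foldr_cons, List.getElem_cons_succ]
      rw [ih j (by simpa using hj) v, ← Nat.xor_assoc, ← Nat.xor_assoc]

lemma ofFn_eq_set {k : ℕ} (g g' : Fin k → ℕ) (j : Fin k) (h : ∀ i, i ≠ j → g' i = g i) :
    List.ofFn g' = (List.ofFn g).set j (g' j) := by
  apply List.ext_getElem
  · simp
  · intro i h1 h2
    simp only [List.getElem_ofFn, List.getElem_set]
    split
    · next he => congr 1; exact Fin.ext (by simp_all)
    · next he => exact h _ (fun hc => he (by rw [← hc]))

lemma xorAll_change {k : ℕ} (g g' : Fin k → ℕ) (j : Fin k) (h : ∀ i, i ≠ j → g' i = g i) :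
    xorAll g' = (xorAll g ^^^ g j) ^^^ g' j := by
  rw [xorAll, ofFn_eq_set g g' j h, foldr_xor_set _ _ (by simp [j.isLt])]
  congr 2
  simp

lemma xorAll_change_ne {k : ℕ} (g g' : Fin k → ℕ) (j : Fin k) (h : ∀ i, i ≠ j → g' i = g i)
    (hne : g' j ≠ g j) (hz : xorAll g = 0) : xorAll g' ≠ 0 := by
  rw [xorAll_change g g' j h, hz, Nat.zero_xor]
  simpa [Nat.xor_eq_zero_iff] using fun e => hne e.symm

lemma xorAll_zero {k : ℕ} : xorAll (fun _ : Fin k => (0:ℕ)) = 0 := by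
  induction k with
  | zero => rfl
  | succ k ih => rw [xorAll, List.ofFn_succ, List.foldr_cons, Nat.zero_xor]; exact ih

lemma exists_mem_testBit (l : List ℕ) (k : ℕ) (h : (l.foldr (· ^^^ ·) 0).testBit k = true) :
    ∃ a ∈ l, a.testBit k = true := by
  induction l with
  | nil => simp at h
  | cons a t ih =>
    rw [List.foldr_cons, Nat.testBit_xor] at h
    by_cases ha : a.testBit k = true
    · exact ⟨a, List.mem_cons_self, ha⟩
    · rw [Bool.eq_false_iff.2 ha, Bool.false_xor] at h
      obtain ⟨b, hb, hbt⟩ := ih h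
      exact ⟨b, List.mem_cons_of_mem _ hb, hbt⟩

lemma nim_move {k : ℕ} (g : Fin k → ℕ) (h : xorAll g ≠ 0) :
    ∃ (j : Fin k) (v : ℕ), v < g j ∧ xorAll (Function.update g j v) = 0 := by
  obtain ⟨i, hi, hi'⟩ := Nat.exists_most_significant_bit h
  obtain ⟨a, ha, hab⟩ := exists_mem_testBit _ i hi
  obtain ⟨j, rfl⟩ := List.mem_ofFn.1 ha
  refine ⟨j, g j ^^^ xorAll g, ?_, ?_⟩
  · refine Nat.lt_of_testBit i ?_ hab fun l hl => ?_
    · rw [Nat.testBit_xor, hab, hi]; rfl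
    · rw [Nat.testBit_xor, hi' l hl, Bool.xor_false]
  · rw [xorAll_change g _ j (fun i hij => Function.update_of_ne hij _ _),
      Function.update_self, Nat.xor_comm (g j) (xorAll g), ← Nat.xor_assoc,
      Nat.xor_comm (xorAll g) (g j)]
    rw [Nat.xor_assoc (g j), Nat.xor_self, Nat.xor_zero, Nat.xor_self]

lemma ev_lt {m : ℕ} (i : Fin m) : 2 * i.1 < 2 * m := by have := i.isLt; omega

lemma od_lt {m : ℕ} (i : Fin m) : 2 * i.1 + 1 < 2 * m := by have := i.isLt; omega

def Ev (m : ℕ) (x : Fin (2*m) → ℕ) : Fin m → ℕ :=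
  fun i => x ⟨2 * i.1, ev_lt i⟩

def Od (m : ℕ) (x : Fin (2*m) → ℕ) : Fin m → ℕ :=
  fun i => x ⟨2 * i.1 + 1, od_lt i⟩

def Z (m : ℕ) (x : Fin (2*m) → ℕ) : Prop := xorAll (Ev m x) = 0 ∧ xorAll (Od m x) = 0

abbrev Mv (m : ℕ) : (Fin (2*m) → ℕ) → (Fin (2*m) → ℕ) → Prop :=
  ecnMove (2*m) {s | Odd s ∧ s ≤ m} 2

lemma sum_lt {m : ℕ} {x y : Fin (2*m) → ℕ} (h : Mv m x y) : (∑ j, y j) < ∑ j, x j := by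
  obtain ⟨hne, hle, -⟩ := h
  obtain ⟨j, hj⟩ := Function.ne_iff.1 hne
  exact Finset.sum_lt_sum (fun i _ => hle i) ⟨j, Finset.mem_univ j, lt_of_le_of_ne (hle j) hj⟩

lemma not_Z_of_move {m : ℕ} (hm : 0 < m) {x y : Fin (2*m) → ℕ} (hZ : Z m x) (h : Mv m x y) :
    ¬ Z m y := by
  obtain ⟨hne, hle, s, ⟨hs1, hs2⟩, i, hmove⟩ := h
  obtain ⟨j, hj⟩ := Function.ne_iff.1 hne
  set a := i % (2*m) with ha
  set b := (i + s) % (2*m) with hb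
  have hja : ∀ j' : Fin (2*m), y j' ≠ x j' → (j':ℕ) = a ∨ (j':ℕ) = b := by
    intro j' hj'
    obtain ⟨t, ht, htj⟩ := hmove j' hj'
    interval_cases t
    · left; simpa using htj
    · right; simpa using htj
  have hpar : a % 2 ≠ b % 2 := by
    have h1 : a % 2 = i % 2 := Nat.mod_mod_of_dvd i ⟨m, rfl⟩
    have h2 : b % 2 = (i + s) % 2 := Nat.mod_mod_of_dvd _ ⟨m, rfl⟩
    have hs : s % 2 = 1 := Nat.odd_iff.1 hs1
    omega
  have hj2 := hja j hj
  rcases Nat.even_or_odd (j : ℕ) with hje | hjo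
  · -- even index changed; even-part xor becomes nonzero
    have hje' : (j : ℕ) % 2 = 0 := Nat.even_iff.1 hje
    have hjlt : (j : ℕ) < 2*m := j.isLt
    set jh : Fin m := ⟨(j : ℕ) / 2, by omega⟩ with hjh
    have key : ∀ i' : Fin m, i' ≠ jh → Ev m y i' = Ev m x i' := by
      intro i' hi'
      by_contra hc
      have hc' : y ⟨2 * i'.1, by have := i'.isLt; omega⟩ ≠ x ⟨2 * i'.1, by have := i'.isLt; omega⟩ := hc
      have h1 : 2 * i'.1 = a ∨ 2 * i'.1 = b := hja _ hc'
      have h2 : (j : ℕ) = a ∨ (j : ℕ) = b := hj2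
      exact hi' (Fin.ext (show i'.1 = (j : ℕ) / 2 by omega))
    have hylt : Ev m y jh ≠ Ev m x jh := by
      have hidx : (⟨2 * jh.1, by have := jh.isLt; omega⟩ : Fin (2*m)) = j :=
        Fin.ext (by simp only [hjh]; omega)
      show y ⟨2 * jh.1, by have := jh.isLt; omega⟩ ≠ x ⟨2 * jh.1, by have := jh.isLt; omega⟩
      rw [hidx]; exact hj
    intro hZy
    exact xorAll_change_ne (Ev m x) (Ev m y) jh key hylt hZ.1 hZy.1
  · -- odd index changed
    have hjo' : (j : ℕ) % 2 = 1 := Nat.odd_iff.1 hjo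
    have hjlt : (j : ℕ) < 2*m := j.isLt
    set jh : Fin m := ⟨(j : ℕ) / 2, by omega⟩ with hjh
    have key : ∀ i' : Fin m, i' ≠ jh → Od m y i' = Od m x i' := by
      intro i' hi'
      by_contra hc
      have hc' : y ⟨2 * i'.1 + 1, by have := i'.isLt; omega⟩ ≠
          x ⟨2 * i'.1 + 1, by have := i'.isLt; omega⟩ := hc
      have h1 : 2 * i'.1 + 1 = a ∨ 2 * i'.1 + 1 = b := hja _ hc'
      have h2 : (j : ℕ) = a ∨ (j : ℕ) = b := hj2
      exact hi' (Fin.ext (show i'.1 = (j : ℕ) / 2 by omega))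
    have hylt : Od m y jh ≠ Od m x jh := by
      have hidx : (⟨2 * jh.1 + 1, by have := jh.isLt; omega⟩ : Fin (2*m)) = j :=
        Fin.ext (by simp only [hjh]; omega)
      show y ⟨2 * jh.1 + 1, by have := jh.isLt; omega⟩ ≠ x ⟨2 * jh.1 + 1, by have := jh.isLt; omega⟩
      rw [hidx]; exact hj
    intro hZy
    exact xorAll_change_ne (Od m x) (Od m y) jh key hylt hZ.2 hZy.2

lemma moveB {m : ℕ} (hm : 0 < m) {x y : Fin (2*m) → ℕ} (a b : Fin (2*m))
    (hab : a.1 % 2 ≠ b.1 % 2) (hle : ∀ j, y j ≤ x j) (hne : y ≠ x)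
    (hch : ∀ j, y j ≠ x j → j = a ∨ j = b) : Mv m x y := by
  have hA : a.1 < 2*m := a.isLt
  have hB : b.1 < 2*m := b.isLt
  have hd : (b.1 + 2*m - a.1) % (2*m) = (b.1 + 2*m - a.1) % (2*m) := rfl
  set d := (b.1 + 2*m - a.1) % (2*m) with hd
  have hdlt : d < 2*m := Nat.mod_lt _ (by omega)
  have hd2 : d % 2 = 1 := by
    have h1 : (b.1 + 2*m - a.1) % (2*m) % 2 = (b.1 + 2*m - a.1) % 2 :=
      Nat.mod_mod_of_dvd _ ⟨m, rfl⟩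
    omega
  have hmod1 : (a.1 + 1 * d) % (2*m) = b.1 := by
    rw [one_mul, hd, Nat.add_mod_mod, show a.1 + (b.1 + 2*m - a.1) = b.1 + 2*m by omega,
      Nat.add_mod_right, Nat.mod_eq_of_lt hB]
  by_cases hdm : d ≤ m
  · refine ⟨hne, hle, d, ⟨Nat.odd_iff.2 hd2, hdm⟩, a.1, ?_⟩
    intro j hj
    rcases hch j hj with rfl | rfl
    · exact ⟨0, by omega, by simp [Nat.mod_eq_of_lt hA]⟩
    · exact ⟨1, by omega, hmod1.symm⟩
  · have hq := Nat.div_add_mod (b.1 + 2*m - a.1) (2*m)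
    rw [← hd] at hq
    have hmod2 : (b.1 + 1 * (2*m - d)) % (2*m) = a.1 := by
      have hgen : ∀ c, 2*m * ((b.1 + 2*m - a.1) / (2*m)) = c →
          b.1 + 1 * (2*m - d) = a.1 + 2*m * ((b.1 + 2*m - a.1) / (2*m)) := by
        intro c hc
        rw [hc] at hq ⊢
        omega
      rw [hgen _ rfl, Nat.add_mul_mod_self_left, Nat.mod_eq_of_lt hA]
    refine ⟨hne, hle, 2*m - d, ⟨Nat.odd_iff.2 (by omega), by omega⟩, b.1, ?_⟩
    intro j hj
    rcases hch j hj with rfl | rfl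
    · exact ⟨1, by omega, hmod2.symm⟩
    · exact ⟨0, by omega, by simp [Nat.mod_eq_of_lt hB]⟩


lemma move_pair {m : ℕ} (hm : 0 < m) (x : Fin (2*m) → ℕ) (j k : Fin m) (v w : ℕ)
    (hv : v ≤ Ev m x j) (hw : w ≤ Od m x k) (hlt : v < Ev m x j ∨ w < Od m x k) :
    ∃ y, Mv m x y ∧ Ev m y = Function.update (Ev m x) j v ∧
      Od m y = Function.update (Od m x) k w := by
  refine ⟨fun j' : Fin (2*m) =>
    if (j' : ℕ) = 2*j.1 then v else if (j' : ℕ) = 2*k.1+1 then w else x j', ?_, ?_, ?_⟩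
  · refine moveB hm ⟨2*j.1, by have := j.isLt; omega⟩ ⟨2*k.1+1, by have := k.isLt; omega⟩
      (by simp) ?_ ?_ ?_
    · intro j'
      split_ifs with h1 h2
      · have hj' : j' = ⟨2*j.1, by have := j.isLt; omega⟩ := Fin.ext h1
        rw [hj']; exact hv
      · have hj' : j' = ⟨2*k.1+1, by have := k.isLt; omega⟩ := Fin.ext h2
        rw [hj']; exact hw
      · exact le_rfl
    · rcases hlt with h | h
      · refine Function.ne_iff.2 ⟨⟨2*j.1, by have := j.isLt; omega⟩, ?_⟩
        show (if 2*j.1 = 2*j.1 then v else _) ≠ _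
        rw [if_pos rfl]; exact Nat.ne_of_lt h
      · refine Function.ne_iff.2 ⟨⟨2*k.1+1, by have := k.isLt; omega⟩, ?_⟩
        show (if 2*k.1+1 = 2*j.1 then v else if 2*k.1+1 = 2*k.1+1 then w else _) ≠ _
        rw [if_neg (by omega), if_pos rfl]; exact Nat.ne_of_lt h
    · intro j' hj'
      by_contra hc
      push_neg at hc
      apply hj'
      show (if (j' : ℕ) = 2*j.1 then v else if (j' : ℕ) = 2*k.1+1 then w else x j') = x j'
      rw [if_neg (fun h => hc.1 (Fin.ext h)), if_neg (fun h => hc.2 (Fin.ext h))]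
  · funext i
    show (if 2*i.1 = 2*j.1 then v else if 2*i.1 = 2*k.1+1 then w else Ev m x i) = _
    rw [Function.update_apply]
    by_cases hij : i = j
    · subst hij; rw [if_pos rfl, if_pos rfl]
    · have h1 : ¬(2*i.1 = 2*j.1) := fun h => hij (Fin.ext (by omega))
      rw [if_neg h1, if_neg (by omega), if_neg hij]
  · funext i
    show (if 2*i.1+1 = 2*j.1 then v else if 2*i.1+1 = 2*k.1+1 then w else Od m x i) = _
    rw [Function.update_apply]
    by_cases hik : i = k
    · subst hik; rw [if_neg (by omega), if_pos rfl, if_pos rfl]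
    · have h2 : ¬(2*i.1+1 = 2*k.1+1) := fun h => hik (Fin.ext (by omega))
      rw [if_neg (by omega), if_neg h2, if_neg hik]

lemma exists_move_to_Z {m : ℕ} (hm : 0 < m) {x : Fin (2*m) → ℕ} (hx : ¬ Z m x) :
    ∃ y, Mv m x y ∧ Z m y := by
  by_cases h0 : xorAll (Ev m x) = 0
  · have h1 : xorAll (Od m x) ≠ 0 := fun h => hx ⟨h0, h⟩
    obtain ⟨k, w, hw, hwz⟩ := nim_move _ h1
    obtain ⟨y, hmv, hEv, hOd⟩ :=
      move_pair hm x ⟨0, hm⟩ k (Ev m x ⟨0, hm⟩) w le_rfl (le_of_lt hw) (Or.inr hw)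
    exact ⟨y, hmv, by rw [hEv, Function.update_eq_self]; exact h0, by rw [hOd]; exact hwz⟩
  · obtain ⟨j, v, hv, hvz⟩ := nim_move _ h0
    by_cases h1 : xorAll (Od m x) = 0
    · obtain ⟨y, hmv, hEv, hOd⟩ :=
        move_pair hm x j ⟨0, hm⟩ v (Od m x ⟨0, hm⟩) (le_of_lt hv) le_rfl (Or.inl hv)
      exact ⟨y, hmv, by rw [hEv]; exact hvz, by rw [hOd, Function.update_eq_self]; exact h1⟩
    · obtain ⟨k, w, hw, hwz⟩ := nim_move _ h1
      obtain ⟨y, hmv, hEv, hOd⟩ :=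
        move_pair hm x j k v w (le_of_lt hv) (le_of_lt hw) (Or.inl hv)
      exact ⟨y, hmv, by rw [hEv]; exact hvz, by rw [hOd]; exact hwz⟩

lemma main_lemma {m : ℕ} (hm : 0 < m) :
    ∀ N (x : Fin (2*m) → ℕ), (∑ j, x j) ≤ N →
      ((Z m x → ¬ IsN (Mv m) x) ∧ (¬ Z m x → IsN (Mv m) x)) := by
  intro N
  induction N with
  | zero =>
    intro x hx
    have hx0 : ∀ j, x j = 0 :=
      fun j => (Finset.sum_eq_zero_iff.1 (Nat.le_zero.1 hx)) j (Finset.mem_univ j)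
    constructor
    · rintro - hN
      obtain ⟨_, y, hxy, -⟩ := hN
      obtain ⟨hne, hle, -⟩ := hxy
      exact hne (funext fun j => by have := hle j; have := hx0 j; omega)
    · intro hnz
      exact absurd ⟨by rw [funext hx0]; exact xorAll_zero,
        by rw [funext hx0]; exact xorAll_zero⟩ hnz
  | succ N ih =>
    intro x hx
    constructor
    · intro hZ hN
      obtain ⟨_, y, hxy, hy⟩ := hN
      have hsy : (∑ j, y j) ≤ N := by have := sum_lt hxy; omega
      obtain ⟨z, hyz, hZz⟩ := exists_move_to_Z hm (not_Z_of_move hm hZ hxy)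
      have hsz : (∑ j, z j) ≤ N := by have := sum_lt hyz; omega
      exact (ih z hsz).1 hZz (hy z hyz)
    · intro hnz
      obtain ⟨y, hxy, hZy⟩ := exists_move_to_Z hm hnz
      refine IsN.intro x y hxy ?_
      intro z hyz
      have hsz : (∑ j, z j) ≤ N := by
        have h1 := sum_lt hxy; have h2 := sum_lt hyz; omega
      exact (ih z hsz).2 (not_Z_of_move hm hZy hyz)

end ECNAux

theorem ecn_even_odd_steps_2_P_iff (m : ℕ) (hm : 1 < m) (n : Fin (2 * m) → ℕ) :
    IsP (ecnMove (2 * m) {s | Odd s ∧ s ≤ m} 2) n ↔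
      (List.ofFn (fun i : Fin m =>
        n ⟨2 * i.1, by have := i.isLt; omega⟩)).foldr (· ^^^ ·) 0 = 0 ∧
      (List.ofFn (fun i : Fin m =>
        n ⟨2 * i.1 + 1, by have := i.isLt; omega⟩)).foldr (· ^^^ ·) 0 = 0 := by
  have hm0 : 0 < m := by omega
  have hiff : IsP (ecnMove (2 * m) {s | Odd s ∧ s ≤ m} 2) n ↔ ECNAux.Z m n := by
    constructor
    · intro hP
      by_contra hc
      obtain ⟨y, hxy, hZy⟩ := ECNAux.exists_move_to_Z hm0 hc
      exact (ECNAux.main_lemma hm0 _ y le_rfl).1 hZy (hP y hxy)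
    · intro hZ y hxy
      exact (ECNAux.main_lemma hm0 _ y le_rfl).2
        (fun h => ECNAux.not_Z_of_move hm0 hZ hxy h)
  exact hiff
end

section
/- Let m > 1 be an integer and h = 2^{m-1} - 1. A position M = (n_0, ..., n_{2^m - 1}) in extended circular nim ECN((2^m)_{1,3,...,h}, 2^m - 2) is a P-position if and only if n_0 = n_2 = ... = n_{2^m - 2} and n_1 = n_3 = ... = n_{2^m - 1}. -/
theorem isP_iff_generic {α : Type*} (move : α → α → Prop) (f : α → ℕ)
    (hf : ∀ x y, move x y → f y < f x) (P : α → Prop)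
    (hPstep : ∀ x y, P x → move x y → ¬ P y)
    (hNstep : ∀ x, ¬ P x → ∃ y, move x y ∧ P y)
    (x : α) : IsP move x ↔ P x := by
  have A : ∀ n x, f x ≤ n → ¬ P x → IsN move x := by
    intro n
    induction n with
    | zero => intro x hx hPx
              obtain ⟨y, hxy, _⟩ := hNstep x hPx
              exact absurd (hf x y hxy) (by omega)
    | succ n ih =>
      intro x hx hPx
      obtain ⟨y, hxy, hPy⟩ := hNstep x hPx
      refine IsN.intro x y hxy (fun z hz => ?_)
      have h1 := hf x y hxy
      have h2 := hf y z hz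
      exact ih z (by omega) (hPstep y z hPy hz)
  have B : ∀ x, IsN move x → ¬ P x := by
    intro x hx
    induction hx with
    | intro x y hxy hy ih =>
      intro hPx
      obtain ⟨z, hyz, hPz⟩ := hNstep y (hPstep x y hPx hxy)
      exact ih z hyz hPz
  constructor
  · intro hP
    by_contra hPx
    obtain ⟨y, hxy, hPy⟩ := hNstep x hPx
    exact B y (hP y hxy) hPy
  · intro hPx y hxy
    exact A (f y) y le_rfl (hPstep x y hPx hxy)

theorem modeq_eq_of_lt {N a b : ℕ} (h : a ≡ b [MOD N]) (ha : a < N) (hb : b < N) : a = b := by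
  have := h
  rwa [Nat.ModEq, Nat.mod_eq_of_lt ha, Nat.mod_eq_of_lt hb] at this

theorem ecn_mod_inj {N s : ℕ} (hs : Nat.Coprime s N) (i t1 t2 : ℕ) (h1 : t1 < N) (h2 : t2 < N)
    (h : (i + t1 * s) % N = (i + t2 * s) % N) : t1 = t2 := by
  have h' : i + t1 * s ≡ i + t2 * s [MOD N] := h
  have h'' := Nat.ModEq.add_left_cancel' i h'
  have h3 : t1 ≡ t2 [MOD N] :=
    Nat.ModEq.cancel_right_of_coprime (by rw [Nat.gcd_comm]; exact hs) h''
  exact modeq_eq_of_lt h3 h1 h2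

theorem ecn_key {N s : ℕ} (hN : 4 ≤ N) (hs : Nat.Coprime s N) (e o i j : ℕ)
    (he : e < N) (ho : o < N)
    (hie : i + (N - 2) * s ≡ e [MOD N]) (hio : i + (N - 1) * s ≡ o [MOD N])
    (hj : j < N) (hje : j ≠ e) (hjo : j ≠ o) :
    ∃ t < N - 2, j = (i + t * s) % N := by
  obtain ⟨v, -, hv⟩ := Nat.exists_mul_mod_eq_one_of_coprime hs (by omega)
  have hsv : s * v ≡ 1 [MOD N] := by
    rwa [Nat.ModEq, Nat.mod_eq_of_lt (show 1 < N by omega)]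
  set w := j + N - i % N with hw
  have himod : i % N < N := Nat.mod_lt _ (by omega)
  have hiw : i + w ≡ j [MOD N] := by
    calc i + w ≡ i % N + w [MOD N] := Nat.ModEq.add_right _ (Nat.mod_modEq i N).symm
    _ = j + N := by omega
    _ ≡ j [MOD N] := by simp [Nat.ModEq, Nat.add_mod_right]
  set t := (w * v) % N with ht
  have htlt : t < N := Nat.mod_lt _ (by omega)
  have hmain : i + t * s ≡ j [MOD N] := by
    calc i + t * s ≡ i + (w * v) * s [MOD N] :=
          Nat.ModEq.add_left i (Nat.ModEq.mul_right s (Nat.mod_modEq _ _))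
    _ = i + w * (s * v) := by ring_nf
    _ ≡ i + w * 1 [MOD N] := Nat.ModEq.add_left i (Nat.ModEq.mul_left w hsv)
    _ = i + w := by ring
    _ ≡ j [MOD N] := hiw
  have ht2 : t ≠ N - 2 := by
    intro hteq
    exact hje (modeq_eq_of_lt (hmain.symm.trans (hteq ▸ hie)) hj he)
  have ht1 : t ≠ N - 1 := by
    intro hteq
    exact hjo (modeq_eq_of_lt (hmain.symm.trans (hteq ▸ hio)) hj ho)
  refine ⟨t, by omega, ?_⟩
  rw [← Nat.mod_eq_of_lt hj]
  exact hmain.symm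

def Ppred (N : ℕ) (n : Fin N → ℕ) : Prop :=
  ∀ p q : Fin N, (p : ℕ) % 2 = (q : ℕ) % 2 → n p = n q

theorem ecn_isP (m : ℕ) (hm : 1 < m) (n : Fin (2 ^ m) → ℕ) :
    IsP (ecnMove (2 ^ m) {s | Odd s ∧ s ≤ 2 ^ (m - 1) - 1} (2 ^ m - 2)) n ↔ Ppred (2 ^ m) n := by
  have hNm : 2 ^ m = 2 * 2 ^ (m - 1) := by
    rw [← pow_succ']; congr 1; omega
  have hNm2 : 2 ^ (m - 1) = 2 * 2 ^ (m - 2) := by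
    rw [← pow_succ']; congr 1; omega
  set N := 2 ^ m with hNdef
  have hh2 : 1 ≤ 2 ^ (m - 2) := Nat.one_le_two_pow
  have hpos : 0 < 2 ^ (m - 2) := Nat.pow_pos (by norm_num)
  have hN4 : 4 ≤ N := by omega
  have hdvd : 2 ∣ N := ⟨2 ^ (m - 1), hNm⟩
  apply isP_iff_generic _ (fun x => ∑ j, x j)
  · rintro x y ⟨hne, hle, -⟩
    apply Finset.sum_lt_sum (fun j _ => hle j)
    obtain ⟨j, hj⟩ := Function.ne_iff.mp hne
    exact ⟨j, Finset.mem_univ _, lt_of_le_of_ne (hle j) hj⟩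
  · -- hPstep
    rintro x y hPx ⟨hne, hle, s, ⟨hsodd, hsle⟩, i, hcond⟩ hPy
    have hs1 : s % 2 = 1 := Nat.odd_iff.mp hsodd
    have hsc : Nat.Coprime s N := hsodd.coprime_two_right.pow_right m
    set u : ℕ := (i + (N - 2) * s) % N with hu
    set v : ℕ := (i + (N - 1) * s) % N with hv
    have hult : u < N := Nat.mod_lt _ (by omega)
    have hvlt : v < N := Nat.mod_lt _ (by omega)
    have hyu : y ⟨u, hult⟩ = x ⟨u, hult⟩ := by
      by_contra hne'
      obtain ⟨t, htlt, hteq⟩ := hcond _ hne'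
      have : N - 2 = t := ecn_mod_inj hsc i (N - 2) t (by omega) (by omega) (hu.symm.trans hteq)
      omega
    have hyv : y ⟨v, hvlt⟩ = x ⟨v, hvlt⟩ := by
      by_contra hne'
      obtain ⟨t, htlt, hteq⟩ := hcond _ hne'
      have : N - 1 = t := ecn_mod_inj hsc i (N - 1) t (by omega) (by omega) (hv.symm.trans hteq)
      omega
    have hpar : u % 2 ≠ v % 2 := by
      have h1 : u % 2 = (i + (N - 2) * s) % 2 := by rw [hu, Nat.mod_mod_of_dvd _ hdvd]
      have h2 : v % 2 = (i + (N - 2) * s + s) % 2 := by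
        rw [hv, Nat.mod_mod_of_dvd _ hdvd]
        congr 1
        have : N - 1 = (N - 2) + 1 := by omega
        rw [this, Nat.succ_mul]
        ring
      omega
    obtain ⟨j, hj⟩ := Function.ne_iff.mp hne
    obtain ⟨w, hwlt, hw2, hyw⟩ : ∃ w, ∃ h : w < N, w % 2 = (j : ℕ) % 2 ∧ y ⟨w, h⟩ = x ⟨w, h⟩ := by
      by_cases hc : u % 2 = (j : ℕ) % 2
      · exact ⟨u, hult, hc, hyu⟩
      · exact ⟨v, hvlt, by omega, hyv⟩
    have e1 : x j = x ⟨w, hwlt⟩ := hPx j ⟨w, hwlt⟩ hw2.symm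
    have e2 : y ⟨w, hwlt⟩ = y j := hPy ⟨w, hwlt⟩ j hw2
    exact hj (by omega)
  · -- hNstep
    intro x hPx
    obtain ⟨e, hemem, hemin⟩ := Finset.exists_min_image
      (Finset.univ.filter fun j : Fin N => (j : ℕ) % 2 = 0) x
      ⟨⟨0, by omega⟩, by simp⟩
    obtain ⟨o, homem, homin⟩ := Finset.exists_min_image
      (Finset.univ.filter fun j : Fin N => (j : ℕ) % 2 = 1) x
      ⟨⟨1, by omega⟩, by simp⟩
    simp only [Finset.mem_filter, Finset.mem_univ, true_and] at hemem homem
    have hemin' : ∀ j : Fin N, (j : ℕ) % 2 = 0 → x e ≤ x j := fun j hj =>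
      hemin j (by simp [hj])
    have homin' : ∀ j : Fin N, (j : ℕ) % 2 = 1 → x o ≤ x j := fun j hj =>
      homin j (by simp [hj])
    set y : Fin N → ℕ := fun j => if (j : ℕ) % 2 = 0 then x e else x o with hy
    have hle : ∀ j, y j ≤ x j := by
      intro j
      by_cases hc : (j : ℕ) % 2 = 0
      · simpa [hy, hc] using hemin' j hc
      · simpa [hy, hc] using homin' j (by omega)
    have hPy : Ppred N y := by
      intro p q hpq
      simp only [hy]
      rw [hpq]
    have hne : y ≠ x := by
      intro h
      exact hPx (fun p q hpq => by rw [← congrFun h p, ← congrFun h q, hPy p q hpq])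
    have hye : y e = x e := by simp [hy, hemem]
    have hyo : y o = x o := by simp [hy, homem]
    -- construct s, i
    set E := (e : ℕ) with hE
    set O := (o : ℕ) with hO
    have hElt : E < N := e.isLt
    have hOlt : O < N := o.isLt
    set d := (O + N - E) % N with hd
    have hdval : (E ≤ O → d = O - E) ∧ (O < E → d = O + N - E) := by
      constructor
      · intro hle'
        rw [hd, show O + N - E = (O - E) + N by omega, Nat.add_mod_right,
          Nat.mod_eq_of_lt (by omega)]
      · intro hlt'
        rw [hd, Nat.mod_eq_of_lt (by omega)]
    have hdfacts : d % 2 = 1 ∧ 1 ≤ d ∧ d ≤ N - 1 := by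
      rcases le_or_gt E O with h | h
      · have := hdval.1 h
        omega
      · have := hdval.2 h
        omega
    have hedo : E + d ≡ O [MOD N] := by
      calc E + d ≡ E + (O + N - E) [MOD N] := Nat.ModEq.add_left _ (Nat.mod_modEq _ _)
      _ = O + N := by omega
      _ ≡ O [MOD N] := by simp [Nat.ModEq, Nat.add_mod_right]
    have hkey : ∀ s i : ℕ, Odd s → s ≤ 2 ^ (m - 1) - 1 →
        (i + (N - 2) * s ≡ E [MOD N] ∧ i + (N - 1) * s ≡ O [MOD N]) ∨
        (i + (N - 2) * s ≡ O [MOD N] ∧ i + (N - 1) * s ≡ E [MOD N]) →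
        ∃ z, ecnMove N {s | Odd s ∧ s ≤ 2 ^ (m - 1) - 1} (N - 2) x z ∧ Ppred N z := by
      intro s i hsodd hsle hcase
      have hsc : Nat.Coprime s N := hsodd.coprime_two_right.pow_right m
      refine ⟨y, ⟨hne, hle, s, ⟨hsodd, hsle⟩, i, ?_⟩, hPy⟩
      intro j hjne
      have hjE : (j : ℕ) ≠ E := by
        intro hh
        exact hjne (by rw [show j = e from Fin.ext hh, hye])
      have hjO : (j : ℕ) ≠ O := by
        intro hh
        exact hjne (by rw [show j = o from Fin.ext hh, hyo])
      rcases hcase with ⟨h1, h2⟩ | ⟨h1, h2⟩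
      · exact ecn_key hN4 hsc E O i j hElt hOlt h1 h2 j.isLt hjE hjO
      · exact ecn_key hN4 hsc O E i j hOlt hElt h1 h2 j.isLt hjO hjE
    by_cases hds : d ≤ 2 ^ (m - 1) - 1
    · refine hkey d (E + 2 * d) (Nat.odd_iff.mpr hdfacts.1) hds (Or.inl ⟨?_, ?_⟩)
      · calc E + 2 * d + (N - 2) * d = E + N * d := by
              rw [add_assoc, ← Nat.add_mul]; congr 2; omega
        _ ≡ E [MOD N] := by simp [Nat.ModEq, Nat.add_mul_mod_self_left]
      · calc E + 2 * d + (N - 1) * d = (E + d) + N * d := by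
              rw [add_assoc, ← Nat.add_mul, show 2 + (N-1) = N + 1 by omega,
                Nat.add_mul, one_mul]; ring
        _ ≡ E + d [MOD N] := by simp [Nat.ModEq, Nat.add_mul_mod_self_left]
        _ ≡ O [MOD N] := hedo
    · have hdge : 2 ^ (m - 1) + 1 ≤ d := by omega
      set s := N - d with hs
      have hsodd : Odd s := Nat.odd_iff.mpr (by omega)
      have hsle : s ≤ 2 ^ (m - 1) - 1 := by omega
      have hose : O + s ≡ E [MOD N] := by
        calc O + s ≡ (E + d) + s [MOD N] := Nat.ModEq.add_right s hedo.symm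
        _ = E + N := by omega
        _ ≡ E [MOD N] := by simp [Nat.ModEq, Nat.add_mod_right]
      refine hkey s (O + 2 * s) hsodd hsle (Or.inr ⟨?_, ?_⟩)
      · calc O + 2 * s + (N - 2) * s = O + N * s := by
              rw [add_assoc, ← Nat.add_mul]; congr 2; omega
        _ ≡ O [MOD N] := by simp [Nat.ModEq, Nat.add_mul_mod_self_left]
      · calc O + 2 * s + (N - 1) * s = (O + s) + N * s := by
              rw [add_assoc, ← Nat.add_mul, show 2 + (N-1) = N + 1 by omega,
                Nat.add_mul, one_mul]; ring
        _ ≡ O + s [MOD N] := by simp [Nat.ModEq, Nat.add_mul_mod_self_left]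
        _ ≡ E [MOD N] := hose

theorem ecn_pow2_P_iff (m : ℕ) (hm : 1 < m) (n : Fin (2 ^ m) → ℕ) :
    IsP (ecnMove (2 ^ m) {s | Odd s ∧ s ≤ 2 ^ (m - 1) - 1} (2 ^ m - 2)) n ↔
      (∀ i j : Fin (2 ^ (m - 1)),
        n ⟨2 * i.1, by
            have h1 := i.isLt
            have h2 : 2 * 2 ^ (m - 1) = 2 ^ m := by
              rw [← pow_succ']; congr 1; omega
            omega⟩ =
        n ⟨2 * j.1, by
            have h1 := j.isLt
            have h2 : 2 * 2 ^ (m - 1) = 2 ^ m := by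
              rw [← pow_succ']; congr 1; omega
            omega⟩) ∧
      (∀ i j : Fin (2 ^ (m - 1)),
        n ⟨2 * i.1 + 1, by
            have h1 := i.isLt
            have h2 : 2 * 2 ^ (m - 1) = 2 ^ m := by
              rw [← pow_succ']; congr 1; omega
            omega⟩ =
        n ⟨2 * j.1 + 1, by
            have h1 := j.isLt
            have h2 : 2 * 2 ^ (m - 1) = 2 ^ m := by
              rw [← pow_succ']; congr 1; omega
            omega⟩) := by
  rw [ecn_isP m hm n]
  have hNm : 2 ^ m = 2 * 2 ^ (m - 1) := by rw [← pow_succ']; congr 1; omega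
  constructor
  · intro hP
    exact ⟨fun i j => hP _ _ (by simp [Nat.mul_mod_right]),
           fun i j => hP _ _ (by simp [Nat.add_mod, Nat.mul_mod_right])⟩
  · rintro ⟨h0, h1⟩ p q hpq
    by_cases hc : (p : ℕ) % 2 = 0
    · have hq := hpq ▸ hc
      have := h0 ⟨p.1 / 2, by have := p.isLt; omega⟩ ⟨q.1 / 2, by have := q.isLt; omega⟩
      have hp' : (⟨2 * (p.1 / 2), by have := p.isLt; omega⟩ : Fin (2 ^ m)) = p :=
        Fin.ext (by simp; omega)
      have hq' : (⟨2 * (q.1 / 2), by have := q.isLt; omega⟩ : Fin (2 ^ m)) = q :=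
        Fin.ext (by simp; omega)
      rwa [hp', hq'] at this
    · have hc' : (p : ℕ) % 2 = 1 := by omega
      have hq : (q : ℕ) % 2 = 1 := by omega
      have := h1 ⟨p.1 / 2, by have := p.isLt; omega⟩ ⟨q.1 / 2, by have := q.isLt; omega⟩
      have hp' : (⟨2 * (p.1 / 2) + 1, by have := p.isLt; omega⟩ : Fin (2 ^ m)) = p :=
        Fin.ext (by simp; omega)
      have hq' : (⟨2 * (q.1 / 2) + 1, by have := q.isLt; omega⟩ : Fin (2 ^ m)) = q :=
        Fin.ext (by simp; omega)
      rwa [hp', hq'] at this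
end
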